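/- Pansu derivative of the top homogeneous coordinate function of L₄: let p = (a₁, a₂, a₃, 1) ∈ L₄ and let q = (q₁, q₂, q₃, q₄) ∈ L₄. Writing w(·) for the fourth coordinate, the one-sided limit lim_{t→0⁺} ( |w(p·δ_t q)|^{1/3} − 1 )/t exists and equals (1/3)·[ (−(1/2)a₃ − (1/12)a₁a₂)·q₁ + (1/12)a₁²·q₂ ]; in particular it is a linear function of the first-layer coordinates q₁, q₂ only. -/

import Mathlib

open Filter Real

noncomputable section

/-- The filiform group `L₄` as `ℝ⁴`. -/
abbrev L4 := ℝ × ℝ × ℝ × ℝ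

/-- The Baker–Campbell–Hausdorff product on `L₄`. -/
def L4mul (p q : L4) : L4 :=
  (p.1 + q.1, p.2.1 + q.2.1,
    p.2.2.1 + q.2.2.1 + (1 / 2) * (p.1 * q.2.1 - p.2.1 * q.1),
    p.2.2.2 + q.2.2.2 + (1 / 2) * (p.1 * q.2.2.1 - p.2.2.1 * q.1)
      + (1 / 12) * (p.1 - q.1) * (p.1 * q.2.1 - p.2.1 * q.1))

/-- The dilations `δ_t(x,y,z,w) = (tx, ty, t²z, t³w)` of `L₄`. -/
def L4dil (t : ℝ) (p : L4) : L4 :=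
  (t * p.1, t * p.2.1, t ^ 2 * p.2.2.1, t ^ 3 * p.2.2.2)

/-- **Pansu derivative of the top homogeneous coordinate function of `L₄`:** at
`p = (a₁, a₂, a₃, 1)`, the one-sided limit of `(|w(p·δ_t q)|^{1/3} − 1)/t` as `t → 0⁺`
exists and equals `(1/3)·[(−(1/2)a₃ − (1/12)a₁a₂)·q₁ + (1/12)a₁²·q₂]`, a linear function
of the first-layer coordinates `q₁, q₂` only. -/
theorem L4_pansu_top_coordinate (a₁ a₂ a₃ : ℝ) (q₁ q₂ q₃ q₄ : ℝ) :
    Tendsto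
      (fun t : ℝ =>
        ((|(L4mul (a₁, a₂, a₃, 1) (L4dil t (q₁, q₂, q₃, q₄))).2.2.2| ^ ((1 : ℝ) / 3)) - 1) / t)
      (nhdsWithin 0 (Set.Ioi 0))
      (nhds ((1 / 3) * ((-(1 / 2) * a₃ - (1 / 12) * a₁ * a₂) * q₁ + (1 / 12) * a₁ ^ 2 * q₂))) := by
  set c₁ : ℝ := (-(1 / 2) * a₃ - (1 / 12) * a₁ * a₂) * q₁ + (1 / 12) * a₁ ^ 2 * q₂ with hc₁
  set c₂ : ℝ := (1 / 2) * a₁ * q₃ + (1 / 12) * (a₂ * q₁ ^ 2 - a₁ * q₁ * q₂) with hc₂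
  set w : ℝ → ℝ := fun t => (L4mul (a₁, a₂, a₃, 1) (L4dil t (q₁, q₂, q₃, q₄))).2.2.2 with hwdef
  have hwpoly : w = fun t => 1 + c₁ * t + c₂ * t ^ 2 + q₄ * t ^ 3 := by
    funext t
    simp only [hwdef, L4mul, L4dil, hc₁, hc₂]
    ring
  have hw0 : w 0 = 1 := by rw [hwpoly]; ring
  -- derivative of w at 0
  have hw : HasDerivAt w c₁ 0 := by
    rw [hwpoly]
    have h1 : HasDerivAt (fun t : ℝ => c₁ * t) c₁ 0 := by
      simpa using (hasDerivAt_id (0:ℝ)).const_mul c₁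
    have h2 : HasDerivAt (fun t : ℝ => c₂ * t ^ 2) 0 0 := by
      simpa using (hasDerivAt_pow 2 (0:ℝ)).const_mul c₂
    have h3 : HasDerivAt (fun t : ℝ => q₄ * t ^ 3) 0 0 := by
      simpa using (hasDerivAt_pow 3 (0:ℝ)).const_mul q₄
    have h := ((h1.const_add 1).add h2).add h3
    rw [add_zero, add_zero] at h
    exact h
  -- derivative of x ↦ x^(1/3) at 1
  have hr : HasDerivAt (fun x : ℝ => x ^ ((1:ℝ)/3)) (1/3) 1 := by
    have := Real.hasDerivAt_rpow_const (x := (1:ℝ)) (p := (1:ℝ)/3) (Or.inl one_ne_zero)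
    simpa using this
  have hcomp : HasDerivAt (fun t => w t ^ ((1:ℝ)/3)) ((1/3) * c₁) 0 := by
    have hr' : HasDerivAt (fun x : ℝ => x ^ ((1:ℝ)/3)) (1/3) (w 0) := hw0 ▸ hr
    have := hr'.comp 0 hw
    exact this
  -- eventually |w t| = w t
  have hpos : ∀ᶠ t in nhds (0:ℝ), 0 < w t := by
    have hc : ContinuousAt w 0 := hw.continuousAt
    have := hc.preimage_mem_nhds (Ioi_mem_nhds (by rw [hw0]; norm_num : (0:ℝ) < w 0))
    filter_upwards [this] with t ht using ht
  have heq : (fun t => |w t| ^ ((1:ℝ)/3)) =ᶠ[nhds (0:ℝ)] (fun t => w t ^ ((1:ℝ)/3)) := by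
    filter_upwards [hpos] with t ht
    rw [abs_of_pos ht]
  have habs : HasDerivAt (fun t => |w t| ^ ((1:ℝ)/3)) ((1/3) * c₁) 0 :=
    hcomp.congr_of_eventuallyEq heq
  have hslope := hasDerivAt_iff_tendsto_slope.mp habs
  have := hslope.mono_left (nhdsWithin_mono 0 (fun x hx => ne_of_gt hx : Set.Ioi (0:ℝ) ⊆ {0}ᶜ))
  refine this.congr' ?_
  filter_upwards [self_mem_nhdsWithin] with t (ht : 0 < t)
  simp [slope_def_field, hw0, div_eq_inv_mul, abs_of_pos, one_rpow]
  exact Or.inl rfl
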